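/- Let π: S → U(H) be an ε-almost representation, A = (1/|S|)∑_{s∈S}π(s), and let H₀ ⊂ H be the range of a spectral projection of A such that ‖π(s)ξ − ξ‖ ≤ α‖ξ‖ for all s ∈ S and ξ ∈ H₀. Writing π(s) as a 2×2 block matrix (A B; C D) with respect to H = H₀ ⊕ H₀⊥, one has ‖B‖ ≤ |S|α and ‖C‖ ≤ |S|α, and there exists a unitary D' on H₀⊥ with ‖D' − D‖ ≤ 2|S|α; setting π'(s) = (1 0; 0 D') yields ‖π'(s) − π(s)‖ ≤ 3|S|α and π' is an (ε + 6|S|α)-almost representation. -/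

import Mathlib

open Finset ContinuousLinearMap

def edgeSet {G : Type*} [Group G] [DecidableEq G] (S : Finset G) : Finset (G × G) :=
  (S ×ˢ S).filter fun p => p.1⁻¹ * p.2 ∈ S

def deg {G : Type*} [Group G] [DecidableEq G] (S : Finset G) (s : G) : ℕ :=
  (S.filter fun s' => s⁻¹ * s' ∈ S).card

def IsAlmostRep {G : Type*} [Group G] {H : Type*} [NormedAddCommGroup H]
    [InnerProductSpace ℂ H] [CompleteSpace H]
    (S : Finset G) (ε : ℝ) (π : G → H →L[ℂ] H) : Prop :=
  (∀ s ∈ S, π s ∈ unitary (H →L[ℂ] H)) ∧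
  (∀ s ∈ S, π s⁻¹ = star (π s)) ∧
  ∀ s₁ ∈ S, ∀ s₂ ∈ S, s₁ * s₂ ∈ S → ‖π (s₁ * s₂) - (π s₁).comp (π s₂)‖ ≤ ε

/-- `d₂ f ((s,s')) = f(s) − f(s') + π(s) f(s⁻¹s')`. -/
def d2 {G : Type*} [Group G] {H : Type*} [NormedAddCommGroup H] [InnerProductSpace ℂ H]
    (π : G → H →L[ℂ] H) (f : G → H) (p : G × G) : H :=
  f p.1 - f p.2 + π p.1 (f (p.1⁻¹ * p.2))


noncomputable def sqCoef : ℕ → ℝ :=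
  WellFounded.fix Nat.lt_wfRel.wf fun n ih =>
    match n, ih with
    | 0, _ => 1
    | (m+1), ih => ((if m = 0 then (-1:ℝ) else 0)
        - ∑ k : Fin m, ih (k.1+1) (Nat.succ_lt_succ k.2) * ih (m - k.1)
            (Nat.lt_succ_of_le (Nat.sub_le m k.1))) / 2

theorem sqCoef_zero : sqCoef 0 = 1 := by
  rw [sqCoef, WellFounded.fix_eq]

theorem sqCoef_succ (m : ℕ) : sqCoef (m+1) = ((if m = 0 then (-1:ℝ) else 0)
    - ∑ k : Fin m, sqCoef (k.1+1) * sqCoef (m - k.1)) / 2 := by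
  rw [sqCoef, WellFounded.fix_eq]

theorem sqCoef_one : sqCoef 1 = -(1/2) := by
  rw [sqCoef_succ]; norm_num

theorem sqCoef_nonpos : ∀ n, 1 ≤ n → sqCoef n ≤ 0 := by
  intro n
  induction n using Nat.strong_induction_on with
  | _ n ih =>
    intro hn
    obtain ⟨m, rfl⟩ : ∃ m, n = m + 1 := ⟨n - 1, by omega⟩
    rw [sqCoef_succ]
    have hsum : 0 ≤ ∑ k : Fin m, sqCoef (k.1+1) * sqCoef (m - k.1) := by
      apply Finset.sum_nonneg
      intro k _
      have h1 : sqCoef (k.1+1) ≤ 0 := ih (k.1+1) (Nat.succ_lt_succ k.2) (Nat.le_add_left _ _)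
      have h2 : sqCoef (m - k.1) ≤ 0 := by
        apply ih (m - k.1) (Nat.lt_succ_of_le (Nat.sub_le m k.1))
        omega
      nlinarith
    have : (if m = 0 then (-1:ℝ) else 0) ≤ 0 := by split <;> norm_num
    linarith

noncomputable def sqTail (n : ℕ) : ℝ := -sqCoef (n+1)

theorem sqTail_nonneg (n : ℕ) : 0 ≤ sqTail n := by
  have := sqCoef_nonpos (n+1) (Nat.le_add_left _ _)
  simp only [sqTail]; linarith

theorem sqTail_zero : sqTail 0 = 1/2 := by simp [sqTail, sqCoef_one]

theorem sqTail_succ (n : ℕ) :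
    sqTail (n+1) = (∑ k ∈ range (n+1), sqTail k * sqTail (n - k)) / 2 := by
  rw [sqTail, sqCoef_succ]
  simp only [Nat.succ_ne_zero, if_false, zero_sub, neg_div, neg_neg]
  congr 1
  rw [← Fin.sum_univ_eq_sum_range]
  apply Finset.sum_congr rfl
  intro k _
  have h1 : sqCoef (k.1+1) = -sqTail k.1 := by simp [sqTail]
  have h2 : sqCoef (n + 1 - k.1) = -sqTail (n - k.1) := by
    have : n + 1 - k.1 = (n - k.1) + 1 := by omega
    rw [this]; simp [sqTail]
  rw [h1, h2]; ring

theorem tri_le (f : ℕ → ℝ) (hf : ∀ n, 0 ≤ f n) (N : ℕ) :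
    ∑ n ∈ range N, ∑ k ∈ range (n+1), f k * f (n-k) ≤ (∑ n ∈ range N, f n)^2 := by
  have swap : ∑ n ∈ range N, ∑ k ∈ range (n+1), f k * f (n-k)
      = ∑ k ∈ range N, ∑ n ∈ Ico k N, f k * f (n-k) := by
    apply Finset.sum_comm'
    intro n k
    simp only [mem_range, mem_Ico]
    omega
  rw [swap, sq, Finset.sum_mul]
  apply Finset.sum_le_sum
  intro k hk
  have h : ∑ n ∈ Ico k N, f k * f (n-k) = f k * ∑ j ∈ range (N-k), f j := by
    rw [Finset.mul_sum, Finset.sum_Ico_eq_sum_range]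
    apply Finset.sum_congr rfl
    intro j _
    have : k + j - k = j := by omega
    rw [this]
  rw [h]
  apply mul_le_mul_of_nonneg_left _ (hf k)
  apply Finset.sum_le_sum_of_subset_of_nonneg
  · exact Finset.range_subset_range.mpr (Nat.sub_le N k)
  · intro i _ _; exact hf i

theorem sqTail_sum_le (N : ℕ) : ∑ n ∈ range N, sqTail n ≤ 1 := by
  induction N with
  | zero => simp
  | succ N ih =>
    have h0 : 0 ≤ ∑ n ∈ range N, sqTail n := Finset.sum_nonneg fun n _ => sqTail_nonneg n
    rw [Finset.sum_range_succ']
    have hmain : ∑ n ∈ range N, sqTail (n+1)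
        ≤ (∑ n ∈ range N, ∑ k ∈ range (n+1), sqTail k * sqTail (n-k)) / 2 := by
      rw [Finset.sum_div]
      apply Finset.sum_le_sum
      intro n _
      rw [sqTail_succ]
    have htri := tri_le sqTail sqTail_nonneg N
    have hsq : (∑ n ∈ range N, sqTail n)^2 ≤ 1 := by nlinarith
    rw [sqTail_zero]
    linarith

theorem summable_sqTail : Summable sqTail :=
  summable_of_sum_range_le sqTail_nonneg sqTail_sum_le

theorem tsum_sqTail_le : ∑' n, sqTail n ≤ 1 :=
  Summable.tsum_le_of_sum_range_le summable_sqTail sqTail_sum_le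

/-- Convolution identity. -/
theorem sqCoef_conv (n : ℕ) :
    ∑ k ∈ range (n+1), sqCoef k * sqCoef (n-k)
      = if n = 0 then 1 else if n = 1 then -1 else 0 := by
  rcases n with _ | m
  · simp [sqCoef_zero]
  · rw [Finset.sum_range_succ, Finset.sum_range_succ']
    simp only [Nat.sub_self, Nat.sub_zero, sqCoef_zero, one_mul, mul_one]
    have hmid : ∑ k ∈ range m, sqCoef (k+1) * sqCoef (m + 1 - (k+1))
        = ∑ k : Fin m, sqCoef (k.1+1) * sqCoef (m - k.1) := by
      rw [← Fin.sum_univ_eq_sum_range]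
      apply Finset.sum_congr rfl
      intro k _
      have : m + 1 - (k.1+1) = m - k.1 := by omega
      rw [this]
    rw [hmid, sqCoef_succ]
    rcases Nat.eq_zero_or_pos m with hm | hm
    · subst hm; simp
    · have h1 : m + 1 ≠ 0 := by omega
      have h2 : m + 1 ≠ 1 := by omega
      have h3 : ¬ (m = 0) := by omega
      simp only [h1, h2, h3, if_false]
      ring

section OperatorSqrt

variable {E : Type*} [NormedAddCommGroup E] [InnerProductSpace ℂ E] [CompleteSpace E]

theorem summable_abs_sqCoef : Summable (fun n => |sqCoef n|) := by
  apply (summable_nat_add_iff 1).mp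
  have : (fun n => |sqCoef (n+1)|) = sqTail := by
    funext n
    rw [sqTail, abs_of_nonpos (sqCoef_nonpos (n+1) (Nat.le_add_left _ _))]
  rw [this]
  exact summable_sqTail

theorem clm_norm_pow_le {x : E →L[ℂ] E} (hx : ‖x‖ ≤ 1) (n : ℕ) : ‖x ^ n‖ ≤ 1 := by
  rcases n with _ | n
  · rw [pow_zero]
    exact ContinuousLinearMap.norm_id_le
  · calc ‖x^(n+1)‖ ≤ ‖x‖^(n+1) := norm_pow_le' x n.succ_pos
      _ ≤ 1 := pow_le_one₀ (norm_nonneg x) hx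

theorem norm_sqCoef_smul_pow {x : E →L[ℂ] E} (hx : ‖x‖ ≤ 1) (n : ℕ) :
    ‖(sqCoef n : ℂ) • x ^ n‖ ≤ |sqCoef n| := by
  rw [norm_smul, Complex.norm_real, Real.norm_eq_abs]
  calc |sqCoef n| * ‖x^n‖ ≤ |sqCoef n| * 1 :=
        mul_le_mul_of_nonneg_left (clm_norm_pow_le hx n) (abs_nonneg _)
    _ = |sqCoef n| := mul_one _

theorem summable_sqCoef_smul_pow {x : E →L[ℂ] E} (hx : ‖x‖ ≤ 1) :
    Summable (fun n => (sqCoef n : ℂ) • x ^ n) := by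
  apply Summable.of_norm
  exact Summable.of_nonneg_of_le (fun n => norm_nonneg _)
    (fun n => norm_sqCoef_smul_pow hx n) summable_abs_sqCoef

/-- The operator square root of `1 - x`, as a power series in `x`. -/
noncomputable def sqrtOneSub (x : E →L[ℂ] E) : E →L[ℂ] E := ∑' n, (sqCoef n : ℂ) • x ^ n

set_option maxHeartbeats 1000000 in
theorem sqrtOneSub_sub_one {x : E →L[ℂ] E} (hx : ‖x‖ ≤ 1) : ‖sqrtOneSub x - 1‖ ≤ ‖x‖ := by
  have h0 : sqrtOneSub x
      = (sqCoef 0 : ℂ) • x ^ 0 + ∑' n, (sqCoef (n+1) : ℂ) • x ^ (n+1) :=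
    Summable.tsum_eq_zero_add (summable_sqCoef_smul_pow hx)
  rw [h0]
  simp only [sqCoef_zero, pow_zero, Complex.ofReal_one, one_smul]
  rw [add_sub_cancel_left]
  have hterm : ∀ n : ℕ, ‖(sqCoef (n+1) : ℂ) • x ^ (n+1)‖ ≤ sqTail n * ‖x‖ := by
    intro n
    rw [norm_smul, Complex.norm_real, Real.norm_eq_abs,
      abs_of_nonpos (sqCoef_nonpos (n+1) (Nat.le_add_left _ _))]
    have h1 : ‖x ^ (n+1)‖ ≤ ‖x‖ := by
      rw [pow_succ']
      calc ‖x * x^n‖ ≤ ‖x‖ * ‖x^n‖ := norm_mul_le _ _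
        _ ≤ ‖x‖ * 1 := mul_le_mul_of_nonneg_left (clm_norm_pow_le hx n) (norm_nonneg _)
        _ = ‖x‖ := mul_one _
    calc -sqCoef (n+1) * ‖x^(n+1)‖ ≤ -sqCoef (n+1) * ‖x‖ :=
          mul_le_mul_of_nonneg_left h1 (sqTail_nonneg n)
      _ = sqTail n * ‖x‖ := by rw [sqTail]
  have hsum2 : Summable (fun n => ‖(sqCoef (n+1) : ℂ) • x ^ (n+1)‖) := by
    apply Summable.of_nonneg_of_le (fun n => norm_nonneg _) hterm
    exact summable_sqTail.mul_right _
  calc ‖∑' n, (sqCoef (n+1) : ℂ) • x ^ (n+1)‖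
      ≤ ∑' n, ‖(sqCoef (n+1) : ℂ) • x ^ (n+1)‖ := norm_tsum_le_tsum_norm hsum2
    _ ≤ ∑' n, sqTail n * ‖x‖ := Summable.tsum_le_tsum hterm hsum2 (summable_sqTail.mul_right _)
    _ = (∑' n, sqTail n) * ‖x‖ := tsum_mul_right
    _ ≤ 1 * ‖x‖ := mul_le_mul_of_nonneg_right tsum_sqTail_le (norm_nonneg _)
    _ = ‖x‖ := one_mul _

set_option maxHeartbeats 1000000 in
theorem sqrtOneSub_mul_self {x : E →L[ℂ] E} (hx : ‖x‖ ≤ 1) :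
    sqrtOneSub x * sqrtOneSub x = 1 - x := by
  have hs : Summable (fun n => ‖(sqCoef n : ℂ) • x ^ n‖) :=
    Summable.of_nonneg_of_le (fun n => norm_nonneg _)
      (fun n => norm_sqCoef_smul_pow hx n) summable_abs_sqCoef
  rw [sqrtOneSub, tsum_mul_tsum_eq_tsum_sum_antidiagonal_of_summable_norm hs hs]
  have hinner : ∀ n : ℕ, ∑ kl ∈ Finset.HasAntidiagonal.antidiagonal n,
      ((sqCoef kl.1 : ℂ) • x ^ kl.1) * ((sqCoef kl.2 : ℂ) • x ^ kl.2)
      = (((if n = 0 then (1:ℝ) else if n = 1 then -1 else 0) : ℝ) : ℂ) • x ^ n := by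
    intro n
    rw [Finset.Nat.sum_antidiagonal_eq_sum_range_succ_mk]
    have : ∀ k ∈ range (n+1),
        ((sqCoef k : ℂ) • x ^ k) * ((sqCoef (n-k) : ℂ) • x ^ (n-k))
          = ((sqCoef k * sqCoef (n-k) : ℝ) : ℂ) • x ^ n := by
      intro k hk
      rw [smul_mul_smul_comm]
      rw [← pow_add]
      have : k + (n - k) = n := by
        rw [mem_range] at hk; omega
      rw [this]
      push_cast
      rfl
    rw [Finset.sum_congr rfl this, ← Finset.sum_smul]
    congr 1
    rw [← Complex.ofReal_sum]
    congr 1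
    exact sqCoef_conv n
  rw [tsum_congr hinner]
  rw [tsum_eq_sum (s := {0, 1}) (by
    intro n hn
    simp only [Finset.mem_insert, Finset.mem_singleton] at hn
    push_neg at hn
    rw [if_neg hn.1, if_neg hn.2]
    simp)]
  rw [Finset.sum_insert (by simp), Finset.sum_singleton]
  norm_num [sub_eq_add_neg]

end OperatorSqrt

section Polarize

variable {E : Type*} [NormedAddCommGroup E] [InnerProductSpace ℂ E] [CompleteSpace E]

theorem star_sqrtOneSub {x : E →L[ℂ] E} (hsx : star x = x) :
    star (sqrtOneSub x) = sqrtOneSub x := by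
  rw [sqrtOneSub, tsum_star]
  apply tsum_congr
  intro n
  rw [star_smul, star_pow, hsx]
  congr 1
  simp [Complex.conj_ofReal]

theorem sqrtOneSub_semiconj {d x₁ x₂ : E →L[ℂ] E} (h : d * x₁ = x₂ * d)
    (h1 : ‖x₁‖ ≤ 1) (h2 : ‖x₂‖ ≤ 1) :
    d * sqrtOneSub x₁ = sqrtOneSub x₂ * d := by
  have hpow : ∀ n : ℕ, d * x₁ ^ n = x₂ ^ n * d := fun n => SemiconjBy.pow_right h n
  calc d * sqrtOneSub x₁ = ∑' n, d * ((sqCoef n : ℂ) • x₁ ^ n) :=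
        ((summable_sqCoef_smul_pow h1).tsum_mul_left d).symm
    _ = ∑' n, ((sqCoef n : ℂ) • x₂ ^ n) * d := by
        apply tsum_congr
        intro n
        rw [mul_smul_comm, hpow n, smul_mul_assoc]
    _ = sqrtOneSub x₂ * d := (summable_sqCoef_smul_pow h2).tsum_mul_right d

theorem isUnit_sqrtOneSub {x : E →L[ℂ] E} (hx : ‖x‖ < 1) : IsUnit (sqrtOneSub x) := by
  have h : ‖1 - sqrtOneSub x‖ < 1 := by
    rw [norm_sub_rev]
    exact lt_of_le_of_lt (sqrtOneSub_sub_one hx.le) hx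
  exact ⟨Units.oneSub (1 - sqrtOneSub x) h, by rw [Units.val_oneSub, sub_sub_cancel]⟩

theorem clm_isUnit_of_norm_one_sub_lt {y : E →L[ℂ] E} (h : ‖1 - y‖ < 1) : IsUnit y :=
  ⟨Units.oneSub (1 - y) h, by rw [Units.val_oneSub, sub_sub_cancel]⟩

theorem clm_norm_one_le : ‖(1 : E →L[ℂ] E)‖ ≤ 1 := by
  rw [ContinuousLinearMap.one_def]
  exact ContinuousLinearMap.norm_id_le

theorem norm_le_one_of_star_mul_self {p : E →L[ℂ] E} (hp : star p * p = 1) : ‖p‖ ≤ 1 := by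
  have h := CStarRing.norm_star_mul_self (x := p)
  rw [hp] at h
  have h1 : ‖(1 : E →L[ℂ] E)‖ ≤ 1 := clm_norm_one_le
  nlinarith [norm_nonneg p]

/-- The unitary polar part of an almost-unitary operator. -/
noncomputable def polarize (d : E →L[ℂ] E) : E →L[ℂ] E :=
  d * Ring.inverse (sqrtOneSub (1 - star d * d))

section PolarizeFacts

variable {d : E →L[ℂ] E}

private theorem star_x1 : star (1 - star d * d) = 1 - star d * d := by
  simp [star_sub, star_mul]

theorem polarize_star_mul_self (h1 : ‖1 - star d * d‖ < 1) : star (polarize d) * polarize d = 1 := by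
  set x₁ := 1 - star d * d with hx₁
  set T := sqrtOneSub x₁ with hT
  have hTT : T * T = star d * d := by rw [hT, sqrtOneSub_mul_self h1.le, hx₁, sub_sub_cancel]
  have hTu : IsUnit T := isUnit_sqrtOneSub h1
  set R := Ring.inverse T with hR
  have hTR : T * R = 1 := Ring.mul_inverse_cancel _ hTu
  have hRT : R * T = 1 := Ring.inverse_mul_cancel _ hTu
  have hsT : star T = T := star_sqrtOneSub star_x1
  have hsR : star R = R := by
    calc star R = star R * (T * R) := by rw [hTR, mul_one]
      _ = (star R * star T) * R := by rw [hsT, mul_assoc]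
      _ = star (T * R) * R := by rw [star_mul]
      _ = R := by rw [hTR, star_one, one_mul]
  calc star (d * R) * (d * R) = (star R * star d) * (d * R) := by rw [star_mul]
    _ = star R * ((star d * d) * R) := by noncomm_ring
    _ = star R * ((T * T) * R) := by rw [hTT]
    _ = star R * (T * (T * R)) := by rw [mul_assoc]
    _ = star R * T := by rw [hTR, mul_one]
    _ = R * T := by rw [hsR]
    _ = 1 := hRT

theorem polarize_mul_star_self (h1 : ‖1 - star d * d‖ < 1) (h2 : ‖1 - d * star d‖ < 1) : polarize d * star (polarize d) = 1 := by
  set x₁ := 1 - star d * d with hx₁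
  set T := sqrtOneSub x₁ with hT
  have hTT : T * T = star d * d := by rw [hT, sqrtOneSub_mul_self h1.le, hx₁, sub_sub_cancel]
  have hTu : IsUnit T := isUnit_sqrtOneSub h1
  set R := Ring.inverse T with hR
  have hTR : T * R = 1 := Ring.mul_inverse_cancel _ hTu
  have hRT : R * T = 1 := Ring.inverse_mul_cancel _ hTu
  have hsT : star T = T := star_sqrtOneSub star_x1
  have hsR : star R = R := by
    calc star R = star R * (T * R) := by rw [hTR, mul_one]
      _ = (star R * star T) * R := by rw [hsT, mul_assoc]
      _ = star (T * R) * R := by rw [star_mul]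
      _ = R := by rw [hTR, star_one, one_mul]
  have hu2 : IsUnit (d * star d) := by
    have := clm_isUnit_of_norm_one_sub_lt (y := d * star d) (by rwa [])
    exact this
  have hRR : (R * R) * (star d * d) = 1 := by
    calc (R * R) * (star d * d) = (R * R) * (T * T) := by rw [hTT]
      _ = R * ((R * T) * T) := by noncomm_ring
      _ = 1 := by rw [hRT, one_mul]; exact hRT
  have key : (d * (R * R) * star d) * (d * star d) = d * star d := by
    calc (d * (R * R) * star d) * (d * star d)
        = d * ((R * R) * (star d * d)) * star d := by noncomm_ring
      _ = d * star d := by rw [hRR, mul_one]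
  have : d * (R * R) * star d = 1 := by
    have := congrArg (· * Ring.inverse (d * star d)) key
    simpa [mul_assoc, Ring.mul_inverse_cancel _ hu2] using this
  calc (d * R) * star (d * R) = (d * R) * (star R * star d) := by rw [star_mul]
    _ = (d * R) * (R * star d) := by rw [hsR]
    _ = d * (R * R) * star d := by noncomm_ring
    _ = 1 := this

theorem polarize_mem_unitary (h1 : ‖1 - star d * d‖ < 1) (h2 : ‖1 - d * star d‖ < 1) : polarize d ∈ unitary (E →L[ℂ] E) :=
  Unitary.mem_iff.mpr ⟨polarize_star_mul_self h1, polarize_mul_star_self h1 h2⟩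

theorem polarize_norm_le (h1 : ‖1 - star d * d‖ < 1) (h2 : ‖1 - d * star d‖ < 1) : ‖polarize d‖ ≤ 1 :=
  norm_le_one_of_star_mul_self (polarize_star_mul_self h1)

theorem polarize_sub_norm_le (h1 : ‖1 - star d * d‖ < 1) (h2 : ‖1 - d * star d‖ < 1) : ‖polarize d - d‖ ≤ ‖1 - star d * d‖ := by
  set x₁ := 1 - star d * d with hx₁
  set T := sqrtOneSub x₁ with hT
  have hTu : IsUnit T := isUnit_sqrtOneSub h1
  set R := Ring.inverse T with hR
  have hRT : R * T = 1 := Ring.inverse_mul_cancel _ hTu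
  have hpT : polarize d * T = d := by
    calc polarize d * T = d * (R * T) := by rw [polarize, mul_assoc]
      _ = d := by rw [hRT, mul_one]
  have hsub : polarize d - d = polarize d * (1 - T) := by
    rw [mul_sub, mul_one, hpT]
  rw [hsub]
  calc ‖polarize d * (1 - T)‖ ≤ ‖polarize d‖ * ‖1 - T‖ := norm_mul_le _ _
    _ ≤ 1 * ‖1 - T‖ := by
        apply mul_le_mul_of_nonneg_right (polarize_norm_le h1 h2) (norm_nonneg _)
    _ = ‖1 - T‖ := one_mul _
    _ = ‖T - 1‖ := norm_sub_rev _ _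
    _ ≤ ‖x₁‖ := sqrtOneSub_sub_one h1.le

theorem polarize_star (h1 : ‖1 - star d * d‖ < 1) (h2 : ‖1 - d * star d‖ < 1) : polarize (star d) = star (polarize d) := by
  set x₁ := 1 - star d * d with hx₁
  set x₂ := 1 - d * star d with hx₂
  set T₁ := sqrtOneSub x₁ with hT₁
  set T₂ := sqrtOneSub x₂ with hT₂
  have hTu₁ : IsUnit T₁ := isUnit_sqrtOneSub h1
  have hTu₂ : IsUnit T₂ := isUnit_sqrtOneSub h2
  set R₁ := Ring.inverse T₁ with hR₁
  set R₂ := Ring.inverse T₂ with hR₂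
  have hTR₁ : T₁ * R₁ = 1 := Ring.mul_inverse_cancel _ hTu₁
  have hRT₁ : R₁ * T₁ = 1 := Ring.inverse_mul_cancel _ hTu₁
  have hTR₂ : T₂ * R₂ = 1 := Ring.mul_inverse_cancel _ hTu₂
  have hsT₁ : star T₁ = T₁ := star_sqrtOneSub star_x1
  have hsT₂ : star T₂ = T₂ := by
    apply star_sqrtOneSub
    simp [hx₂, star_sub, star_mul]
  have hsR₁ : star R₁ = R₁ := by
    calc star R₁ = star R₁ * (T₁ * R₁) := by rw [hTR₁, mul_one]
      _ = (star R₁ * star T₁) * R₁ := by rw [hsT₁, mul_assoc]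
      _ = star (T₁ * R₁) * R₁ := by rw [star_mul]
      _ = R₁ := by rw [hTR₁, star_one, one_mul]
  have hsemi : d * x₁ = x₂ * d := by
    rw [hx₁, hx₂]; noncomm_ring
  have hdT : d * T₁ = T₂ * d := sqrtOneSub_semiconj hsemi h1.le h2.le
  have hdTstar : T₁ * star d = star d * T₂ := by
    have := congrArg star hdT
    rw [star_mul, star_mul, hsT₁, hsT₂] at this
    exact this
  have hkey : star d * R₂ = R₁ * star d := by
    calc star d * R₂ = (R₁ * T₁) * (star d * R₂) := by rw [hRT₁, one_mul]
      _ = R₁ * ((T₁ * star d) * R₂) := by noncomm_ring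
      _ = R₁ * ((star d * T₂) * R₂) := by rw [hdTstar]
      _ = R₁ * (star d * (T₂ * R₂)) := by rw [mul_assoc]
      _ = R₁ * star d := by rw [hTR₂, mul_one]
  have hps : polarize (star d) = star d * R₂ := by
    rw [polarize, star_star]
  rw [hps, hkey, polarize, star_mul, hsR₁]

end PolarizeFacts

end Polarize

section Proj

open ContinuousLinearMap

variable {H : Type*} [NormedAddCommGroup H] [InnerProductSpace ℂ H] [CompleteSpace H]
variable (K : Submodule ℂ H) [CompleteSpace K]

/-- The projection onto `K` as an endomorphism of `H`. -/
noncomputable def Pk : H →L[ℂ] H := K.subtypeL.comp (Submodule.orthogonalProjectionOnto K)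

theorem Pk_apply (u : H) : (Pk K) u = (Submodule.orthogonalProjectionOnto K u : H) := rfl

theorem Pk_mem (u : H) : (Pk K) u ∈ K := (Submodule.orthogonalProjectionOnto K u).2

theorem Pk_fix {ξ : H} (h : ξ ∈ K) : (Pk K) ξ = ξ := by
  have := Submodule.orthogonalProjectionOnto_mem_subspace_eq_self (K := K) ⟨ξ, h⟩
  rw [Pk_apply]
  exact congrArg Subtype.val this

theorem Pk_norm_le (u : H) : ‖(Pk K) u‖ ≤ ‖u‖ := by
  rw [Pk_apply]
  have h : ‖Submodule.orthogonalProjectionOnto K u‖ ≤ ‖Submodule.orthogonalProjectionOnto K‖ * ‖u‖ :=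
    (Submodule.orthogonalProjectionOnto K).le_opNorm u
  have h2 : ‖Submodule.orthogonalProjectionOnto K‖ ≤ 1 := Submodule.orthogonalProjectionOnto_norm_le K
  have := norm_nonneg u
  calc ‖(Submodule.orthogonalProjectionOnto K u : H)‖ = ‖Submodule.orthogonalProjectionOnto K u‖ := rfl
    _ ≤ ‖Submodule.orthogonalProjectionOnto K‖ * ‖u‖ := h
    _ ≤ 1 * ‖u‖ := by nlinarith
    _ = ‖u‖ := one_mul _

theorem Pk_star : star ((Pk K)) = (Pk K) := isSelfAdjoint_starProjection K

theorem Pk_zero {v : H} (hv : v ∈ Kᗮ) : (Pk K) v = 0 := by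
  rw [Pk_apply, Submodule.orthogonalProjectionOnto_apply_of_mem_orthogonal hv]
  rfl

theorem one_sub_Pk_apply (u : H) : (1 - (Pk K)) u = (Submodule.orthogonalProjectionOnto Kᗮ u : H) := by
  have h := Submodule.starProjection_add_starProjection_orthogonal (K := K) u
  have : (1 - (Pk K)) u = u - (Pk K) u := rfl
  rw [this, Pk_apply, sub_eq_iff_eq_add']
  exact h.symm

theorem one_sub_Pk_norm_le (u : H) : ‖(1 - (Pk K)) u‖ ≤ ‖u‖ := by
  rw [one_sub_Pk_apply]
  have h : ‖Submodule.orthogonalProjectionOnto Kᗮ u‖ ≤ ‖Submodule.orthogonalProjectionOnto Kᗮ‖ * ‖u‖ :=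
    (Submodule.orthogonalProjectionOnto Kᗮ).le_opNorm u
  have h2 : ‖Submodule.orthogonalProjectionOnto Kᗮ‖ ≤ 1 := Submodule.orthogonalProjectionOnto_norm_le Kᗮ
  have := norm_nonneg u
  calc ‖(Submodule.orthogonalProjectionOnto Kᗮ u : H)‖ = ‖Submodule.orthogonalProjectionOnto Kᗮ u‖ := rfl
    _ ≤ 1 * ‖u‖ := by nlinarith
    _ = ‖u‖ := one_mul _

theorem one_sub_Pk_fix {v : H} (hv : v ∈ Kᗮ) : (1 - (Pk K)) v = v := by
  have : (1 - (Pk K)) v = v - (Pk K) v := rfl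
  rw [this, Pk_zero K hv, sub_zero]

theorem one_sub_Pk_zero {ξ : H} (h : ξ ∈ K) : (1 - (Pk K)) ξ = 0 := by
  have : (1 - (Pk K)) ξ = ξ - (Pk K) ξ := rfl
  rw [this, Pk_fix K h, sub_self]

theorem Pk_idem (u : H) : (Pk K) ((Pk K) u) = (Pk K) u := Pk_fix K (Pk_mem K u)

theorem Qk_coe (u : H) : (Kᗮ.subtypeL ((Submodule.orthogonalProjectionOnto Kᗮ) u) : H) = (1 - (Pk K)) u :=
  (one_sub_Pk_apply K u).symm

theorem Qk_subtype (v : Kᗮ) : Submodule.orthogonalProjectionOnto Kᗮ (Kᗮ.subtypeL v) = v :=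
  Submodule.orthogonalProjectionOnto_mem_subspace_eq_self v

theorem Qk_of_mem_K {ξ : H} (h : ξ ∈ K) : Submodule.orthogonalProjectionOnto Kᗮ ξ = 0 :=
  Submodule.orthogonalProjectionOnto_apply_of_mem_orthogonal
    (K.le_orthogonal_orthogonal h)

theorem Qk_norm_le (u : H) : ‖Submodule.orthogonalProjectionOnto Kᗮ u‖ ≤ ‖u‖ := by
  have : ‖Submodule.orthogonalProjectionOnto Kᗮ u‖ = ‖(Kᗮ.subtypeL ((Submodule.orthogonalProjectionOnto Kᗮ) u) : H)‖ := rfl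
  rw [this, Qk_coe]
  exact one_sub_Pk_norm_le K u

theorem Pk_add_Qk : (Pk K) + Kᗮ.subtypeL.comp (Submodule.orthogonalProjectionOnto Kᗮ) = 1 := by
  ext u
  have h := Submodule.starProjection_add_starProjection_orthogonal (K := K) u
  exact h

end Proj

open Finset ContinuousLinearMap

section MainAux

variable {G : Type*} [Group G] [DecidableEq G]
variable {H : Type*} [NormedAddCommGroup H] [InnerProductSpace ℂ H] [CompleteSpace H]
variable {K : Submodule ℂ H} [CompleteSpace K]

/-- Pointwise bound for the lower-left block. -/
theorem blockC_pt {π : G → H →L[ℂ] H} {α : ℝ} {s : G}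
    (hinv_s : ∀ ξ ∈ K, ‖π s ξ - ξ‖ ≤ α * ‖ξ‖) (u : H) :
    ‖(1 - Pk K) (π s (Pk K u))‖ ≤ α * ‖Pk K u‖ := by
  have h0 : (1 - Pk K) (Pk K u) = 0 := one_sub_Pk_zero K (Pk_mem K u)
  have h1 : (1 - Pk K) (π s (Pk K u)) = (1 - Pk K) (π s (Pk K u) - Pk K u) := by
    rw [map_sub, h0, sub_zero]
  rw [h1]
  calc ‖(1 - Pk K) (π s (Pk K u) - Pk K u)‖ ≤ ‖π s (Pk K u) - Pk K u‖ :=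
        one_sub_Pk_norm_le K _
    _ ≤ α * ‖Pk K u‖ := hinv_s (Pk K u) (Pk_mem K u)

theorem blockC_op {π : G → H →L[ℂ] H} {α : ℝ} (hα : 0 ≤ α) {s : G}
    (hinv_s : ∀ ξ ∈ K, ‖π s ξ - ξ‖ ≤ α * ‖ξ‖) :
    ‖(1 - Pk K) * (π s * Pk K)‖ ≤ α := by
  apply ContinuousLinearMap.opNorm_le_bound _ hα
  intro u
  have h1 : ((1 - Pk K) * (π s * Pk K)) u = (1 - Pk K) (π s (Pk K u)) := rfl
  rw [h1]
  calc ‖(1 - Pk K) (π s (Pk K u))‖ ≤ α * ‖Pk K u‖ := blockC_pt hinv_s u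
    _ ≤ α * ‖u‖ := mul_le_mul_of_nonneg_left (Pk_norm_le K u) hα

theorem blockB_op {π : G → H →L[ℂ] H} {α : ℝ} (hα : 0 ≤ α) {s : G}
    (hstar_s : π s⁻¹ = star (π s))
    (hinv_s' : ∀ ξ ∈ K, ‖π s⁻¹ ξ - ξ‖ ≤ α * ‖ξ‖) :
    ‖Pk K * (π s * (1 - Pk K))‖ ≤ α := by
  have h2 : star (π s⁻¹) = π s := by rw [hstar_s, star_star]
  have hst : star ((1 - Pk K) * (π s⁻¹ * Pk K)) = Pk K * (π s * (1 - Pk K)) := by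
    rw [star_mul, star_mul, h2, Pk_star, star_sub, star_one, Pk_star, mul_assoc]
  rw [← hst, norm_star]
  exact blockC_op hα hinv_s'

theorem blockB_pt {π : G → H →L[ℂ] H} {α : ℝ} (hα : 0 ≤ α) {s : G}
    (hstar_s : π s⁻¹ = star (π s))
    (hinv_s' : ∀ ξ ∈ K, ‖π s⁻¹ ξ - ξ‖ ≤ α * ‖ξ‖) (u : H) :
    ‖Pk K (π s ((1 - Pk K) u))‖ ≤ α * ‖(1 - Pk K) u‖ := by
  have h3 : (1 - Pk K) ((1 - Pk K) u) = (1 - Pk K) u := by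
    have hm : (1 - Pk K) u ∈ Kᗮ := by
      rw [one_sub_Pk_apply]
      exact (Submodule.orthogonalProjectionOnto Kᗮ u).2
    exact one_sub_Pk_fix K hm
  have h4 : Pk K (π s ((1 - Pk K) u)) = (Pk K * (π s * (1 - Pk K))) ((1 - Pk K) u) := by
    have : (Pk K * (π s * (1 - Pk K))) ((1 - Pk K) u)
        = Pk K (π s ((1 - Pk K) ((1 - Pk K) u))) := rfl
    rw [this, h3]
  rw [h4]
  calc ‖(Pk K * (π s * (1 - Pk K))) ((1 - Pk K) u)‖
      ≤ ‖Pk K * (π s * (1 - Pk K))‖ * ‖(1 - Pk K) u‖ := ContinuousLinearMap.le_opNorm _ _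
    _ ≤ α * ‖(1 - Pk K) u‖ :=
        mul_le_mul_of_nonneg_right (blockB_op hα hstar_s hinv_s') (norm_nonneg _)

/-- The lower-right block of `π t`. -/
noncomputable def Dop (π : G → H →L[ℂ] H) (K : Submodule ℂ H) [CompleteSpace K] (t : G) :
    Kᗮ →L[ℂ] Kᗮ :=
  (Submodule.orthogonalProjectionOnto Kᗮ).comp ((π t).comp Kᗮ.subtypeL)

theorem Dop_star {π : G → H →L[ℂ] H} {s : G} (hstar_s : π s⁻¹ = star (π s)) :
    star (Dop π K s) = Dop π K s⁻¹ := by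
  rw [ContinuousLinearMap.star_eq_adjoint, Dop, ContinuousLinearMap.adjoint_comp,
    ContinuousLinearMap.adjoint_comp, Submodule.adjoint_subtypeL,
    Submodule.adjoint_orthogonalProjection, Dop, ContinuousLinearMap.comp_assoc]
  congr 1
  rw [hstar_s, ContinuousLinearMap.star_eq_adjoint]

theorem Dop_norm_le {π : G → H →L[ℂ] H} {s : G}
    (huni : π s ∈ unitary (H →L[ℂ] H)) : ‖Dop π K s‖ ≤ 1 := by
  have hπn : ‖π s‖ ≤ 1 := norm_le_one_of_star_mul_self (Unitary.mem_iff.mp huni).1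
  apply ContinuousLinearMap.opNorm_le_bound _ zero_le_one
  intro v
  have h1 : Dop π K s v = Submodule.orthogonalProjectionOnto Kᗮ (π s (Kᗮ.subtypeL v)) := rfl
  rw [h1, one_mul]
  calc ‖Submodule.orthogonalProjectionOnto Kᗮ (π s (Kᗮ.subtypeL v))‖ ≤ ‖π s (Kᗮ.subtypeL v)‖ :=
        Qk_norm_le K _
    _ ≤ ‖π s‖ * ‖Kᗮ.subtypeL v‖ := (π s).le_opNorm _
    _ ≤ 1 * ‖v‖ := by
        have : ‖Kᗮ.subtypeL v‖ = ‖v‖ := rfl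
        rw [this]
        exact mul_le_mul_of_nonneg_right hπn (norm_nonneg _)
    _ = ‖v‖ := one_mul _

/-- The key defect estimate: `‖1 - D*D‖ ≤ α²`. -/
theorem Dop_defect {π : G → H →L[ℂ] H} {α : ℝ} (hα : 0 ≤ α) {s : G}
    (huni : π s ∈ unitary (H →L[ℂ] H))
    (hstar_s : π s⁻¹ = star (π s))
    (hinv_s' : ∀ ξ ∈ K, ‖π s⁻¹ ξ - ξ‖ ≤ α * ‖ξ‖) :
    ‖1 - star (Dop π K s) * Dop π K s‖ ≤ α * α := by
  apply ContinuousLinearMap.opNorm_le_bound _ (mul_nonneg hα hα)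
  intro v
  have hvmem : (Kᗮ.subtypeL v : H) ∈ Kᗮ := v.2
  set w : H := π s (Kᗮ.subtypeL v) with hw
  -- π s⁻¹ inverts π s pointwise
  have hinvpt : ∀ z : H, π s⁻¹ (π s z) = z := by
    intro z
    have h1 : (star (π s) * π s) z = z := by
      rw [(Unitary.mem_iff.mp huni).1]
      rfl
    rw [hstar_s]
    exact h1
  -- compute the defect applied to v
  have hcompute : (1 - star (Dop π K s) * Dop π K s) v
      = Submodule.orthogonalProjectionOnto Kᗮ (π s⁻¹ (Pk K w)) := by
    rw [Dop_star hstar_s]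
    have h1 : (1 - Dop π K s⁻¹ * Dop π K s) v = v - Dop π K s⁻¹ (Dop π K s v) := rfl
    rw [h1]
    have h2 : Dop π K s⁻¹ (Dop π K s v)
        = Submodule.orthogonalProjectionOnto Kᗮ (π s⁻¹ ((1 - Pk K) w)) := by
      have : Dop π K s⁻¹ (Dop π K s v)
          = Submodule.orthogonalProjectionOnto Kᗮ (π s⁻¹ (Kᗮ.subtypeL (Submodule.orthogonalProjectionOnto Kᗮ w))) := rfl
      rw [this, Qk_coe]
    rw [h2]
    have h3 : (1 - Pk K) w = w - Pk K w := rfl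
    rw [h3, map_sub, map_sub]
    have h4 : π s⁻¹ w = Kᗮ.subtypeL v := hinvpt _
    rw [h4, Qk_subtype]
    abel
  rw [hcompute]
  -- now estimate
  have e1 : ‖Submodule.orthogonalProjectionOnto Kᗮ (π s⁻¹ (Pk K w))‖ = ‖(1 - Pk K) (π s⁻¹ (Pk K w))‖ := by
    have : ‖Submodule.orthogonalProjectionOnto Kᗮ (π s⁻¹ (Pk K w))‖
        = ‖(Kᗮ.subtypeL (Submodule.orthogonalProjectionOnto Kᗮ (π s⁻¹ (Pk K w))) : H)‖ := rfl
    rw [this, Qk_coe]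
  rw [e1]
  have e2 : ‖(1 - Pk K) (π s⁻¹ (Pk K w))‖ ≤ α * ‖Pk K w‖ := by
    have h5 : (1 - Pk K) (π s⁻¹ (Pk K w)) = (1 - Pk K) (π s⁻¹ (Pk K (Pk K w))) := by
      rw [Pk_idem]
    rw [h5]
    calc ‖(1 - Pk K) (π s⁻¹ (Pk K (Pk K w)))‖ ≤ α * ‖Pk K (Pk K w)‖ :=
          blockC_pt hinv_s' (Pk K w)
      _ = α * ‖Pk K w‖ := by rw [Pk_idem]
  have e3 : ‖Pk K w‖ ≤ α * ‖v‖ := by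
    have h6 : (1 - Pk K) (Kᗮ.subtypeL v) = Kᗮ.subtypeL v := one_sub_Pk_fix K hvmem
    have h7 : Pk K w = Pk K (π s ((1 - Pk K) (Kᗮ.subtypeL v))) := by rw [h6]
    rw [h7]
    calc ‖Pk K (π s ((1 - Pk K) (Kᗮ.subtypeL v)))‖ ≤ α * ‖(1 - Pk K) (Kᗮ.subtypeL v)‖ :=
          blockB_pt hα hstar_s hinv_s' _
      _ = α * ‖v‖ := by rw [h6]; rfl
  calc ‖(1 - Pk K) (π s⁻¹ (Pk K w))‖ ≤ α * ‖Pk K w‖ := e2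
    _ ≤ α * (α * ‖v‖) := mul_le_mul_of_nonneg_left e3 hα
    _ = α * α * ‖v‖ := by ring

end MainAux

section PsiAux

variable {H : Type*} [NormedAddCommGroup H] [InnerProductSpace ℂ H] [CompleteSpace H]
variable (K : Submodule ℂ H) [CompleteSpace K]

theorem Psi_mul (A B : Kᗮ →L[ℂ] Kᗮ) :
    (Pk K + Kᗮ.subtypeL.comp (A.comp (Submodule.orthogonalProjectionOnto Kᗮ)))
      * (Pk K + Kᗮ.subtypeL.comp (B.comp (Submodule.orthogonalProjectionOnto Kᗮ)))
    = Pk K + Kᗮ.subtypeL.comp ((A.comp B).comp (Submodule.orthogonalProjectionOnto Kᗮ)) := by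
  ext u
  simp only [ContinuousLinearMap.mul_apply, ContinuousLinearMap.add_apply,
    ContinuousLinearMap.comp_apply, map_add]
  rw [Pk_idem, Qk_of_mem_K K (Pk_mem K u), Qk_subtype K, map_zero, map_zero, add_zero,
    show (Pk K) (Kᗮ.subtypeL (B ((Submodule.orthogonalProjectionOnto Kᗮ) u))) = 0 from
      Pk_zero K (B ((Submodule.orthogonalProjectionOnto Kᗮ) u)).2, zero_add]

theorem Psi_star (A : Kᗮ →L[ℂ] Kᗮ) :
    star (Pk K + Kᗮ.subtypeL.comp (A.comp (Submodule.orthogonalProjectionOnto Kᗮ)))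
    = Pk K + Kᗮ.subtypeL.comp ((star A).comp (Submodule.orthogonalProjectionOnto Kᗮ)) := by
  rw [star_add, Pk_star]
  congr 1
  rw [ContinuousLinearMap.star_eq_adjoint, ContinuousLinearMap.adjoint_comp,
    ContinuousLinearMap.adjoint_comp, Submodule.adjoint_subtypeL,
    Submodule.adjoint_orthogonalProjection, ContinuousLinearMap.comp_assoc,
    ← ContinuousLinearMap.star_eq_adjoint]

theorem Psi_id :
    Pk K + Kᗮ.subtypeL.comp ((1 : Kᗮ →L[ℂ] Kᗮ).comp (Submodule.orthogonalProjectionOnto Kᗮ)) = 1 := by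
  ext u
  simp only [ContinuousLinearMap.add_apply, ContinuousLinearMap.comp_apply,
    ContinuousLinearMap.one_apply]
  exact Submodule.starProjection_add_starProjection_orthogonal (K := K) u

end PsiAux

set_option maxHeartbeats 2000000 in
/-- Block-perturbation: if `H₀ = K` is the range of a spectral projection of
`A = (1/|S|)∑_{s∈S}π(s)` consisting of `α`-almost-invariant vectors, then writing
`π(s) = (A B; C D)` with respect to `H = K ⊕ Kᗮ` one has `‖B‖, ‖C‖ ≤ |S|α`, there is a
unitary `D'` on `Kᗮ` with `‖D' − D‖ ≤ 2|S|α`, and `π'(s) = (1 0; 0 D')` satisfies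
`‖π'(s) − π(s)‖ ≤ 3|S|α` and is an `(ε + 6|S|α)`-almost representation. -/
theorem stmt17 {G : Type*} [Group G] [DecidableEq G]
    {H : Type*} [NormedAddCommGroup H] [InnerProductSpace ℂ H] [CompleteSpace H]
    (S : Finset G) (hsym : ∀ s ∈ S, s⁻¹ ∈ S) (hone : (1 : G) ∉ S)
    (ε α : ℝ) (hε : 0 ≤ ε) (hα : 0 ≤ α)
    (π : G → H →L[ℂ] H) (hπ : IsAlmostRep S ε π)
    (K : Submodule ℂ H) [CompleteSpace K]
    (P₀ : H →L[ℂ] H) (hP₀sa : IsSelfAdjoint P₀) (hP₀idem : P₀.comp P₀ = P₀)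
    (hP₀comm : ∀ u : H,
      P₀ ((((S.card : ℂ))⁻¹ • ∑ s ∈ S, π s) u) = (((S.card : ℂ))⁻¹ • ∑ s ∈ S, π s) (P₀ u))
    (hK : K = LinearMap.range (P₀ : H →ₗ[ℂ] H))
    (hinv : ∀ s ∈ S, ∀ ξ ∈ K, ‖π s ξ - ξ‖ ≤ α * ‖ξ‖) :
    (∀ s ∈ S,
      ‖(K.subtypeL.comp (Submodule.orthogonalProjectionOnto K)).comp
          ((π s).comp (1 - K.subtypeL.comp (Submodule.orthogonalProjectionOnto K)))‖ ≤ S.card * α ∧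
      ‖(1 - K.subtypeL.comp (Submodule.orthogonalProjectionOnto K)).comp
          ((π s).comp (K.subtypeL.comp (Submodule.orthogonalProjectionOnto K)))‖ ≤ S.card * α ∧
      ∃ D' : Kᗮ →L[ℂ] Kᗮ, D' ∈ unitary (Kᗮ →L[ℂ] Kᗮ) ∧
        ‖D' - (Submodule.orthogonalProjectionOnto Kᗮ).comp ((π s).comp Kᗮ.subtypeL)‖
          ≤ 2 * S.card * α) ∧
    ∃ π' : G → H →L[ℂ] H,
      (∀ s ∈ S, π' s ∈ unitary (H →L[ℂ] H)) ∧
      (∀ s ∈ S, ∀ ξ ∈ K, π' s ξ = ξ) ∧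
      (∀ s ∈ S, ∀ ξ ∈ Kᗮ, π' s ξ ∈ Kᗮ) ∧
      (∀ s ∈ S, ‖π' s - π s‖ ≤ 3 * S.card * α) ∧
      IsAlmostRep S (ε + 6 * S.card * α) π' := by
  obtain ⟨huni, hstar, hmulπ⟩ := hπ
  -- defect bounds
  have hdle : ∀ s ∈ S, ‖1 - star (Dop π K s) * Dop π K s‖ ≤ α * α := fun s hs =>
    Dop_defect hα (huni s hs) (hstar s hs) (hinv s⁻¹ (hsym s hs))
  have hd2le : ∀ s ∈ S, ‖1 - Dop π K s * star (Dop π K s)‖ ≤ α * α := by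
    intro s hs
    have h := hdle s⁻¹ (hsym s hs)
    rw [Dop_star (hstar s⁻¹ (hsym s hs)), inv_inv] at h
    rw [Dop_star (hstar s hs)]
    exact h
  have hπnorm : ∀ s ∈ S, ‖π s‖ ≤ 1 := fun s hs =>
    norm_le_one_of_star_mul_self (Unitary.mem_iff.mp (huni s hs)).1
  constructor
  · -- ===== first conjunct =====
    intro s hs
    have hs' := hsym s hs
    have hcard : (1 : ℝ) ≤ (S.card : ℝ) := by
      have h := Finset.card_pos.mpr ⟨s, hs⟩
      exact_mod_cast h
    refine ⟨?_, ?_, ?_⟩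
    · -- B bound
      have hb : ‖Pk K * (π s * (1 - Pk K))‖ ≤ α := blockB_op hα (hstar s hs) (hinv s⁻¹ hs')
      have hconv : (K.subtypeL.comp (Submodule.orthogonalProjectionOnto K)).comp
          ((π s).comp (1 - K.subtypeL.comp (Submodule.orthogonalProjectionOnto K)))
          = Pk K * (π s * (1 - Pk K)) := rfl
      rw [hconv]
      nlinarith
    · -- C bound
      have hb : ‖(1 - Pk K) * (π s * Pk K)‖ ≤ α := blockC_op hα (hinv s hs)
      have hconv : (1 - K.subtypeL.comp (Submodule.orthogonalProjectionOnto K)).comp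
          ((π s).comp (K.subtypeL.comp (Submodule.orthogonalProjectionOnto K)))
          = (1 - Pk K) * (π s * Pk K) := rfl
      rw [hconv]
      nlinarith
    · -- D' existence
      have hconv : (Submodule.orthogonalProjectionOnto Kᗮ).comp ((π s).comp Kᗮ.subtypeL) = Dop π K s := rfl
      rw [hconv]
      by_cases hα1 : α < 1
      · have hlt1 : ‖1 - star (Dop π K s) * Dop π K s‖ < 1 :=
          lt_of_le_of_lt (hdle s hs) (by nlinarith)
        have hlt2 : ‖1 - Dop π K s * star (Dop π K s)‖ < 1 :=
          lt_of_le_of_lt (hd2le s hs) (by nlinarith)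
        refine ⟨polarize (Dop π K s), polarize_mem_unitary hlt1 hlt2, ?_⟩
        calc ‖polarize (Dop π K s) - Dop π K s‖
            ≤ ‖1 - star (Dop π K s) * Dop π K s‖ := polarize_sub_norm_le hlt1 hlt2
          _ ≤ α * α := hdle s hs
          _ ≤ 2 * S.card * α := by nlinarith
      · push_neg at hα1
        refine ⟨1, Unitary.mem_iff.mpr ⟨by simp, by simp⟩, ?_⟩
        have hns : ‖(1 : Kᗮ →L[ℂ] Kᗮ) - Dop π K s‖ ≤ ‖(1 : Kᗮ →L[ℂ] Kᗮ)‖ + ‖Dop π K s‖ :=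
          norm_sub_le (1 : Kᗮ →L[ℂ] Kᗮ) (Dop π K s)
        have h1n : ‖(1 : Kᗮ →L[ℂ] Kᗮ)‖ ≤ 1 := clm_norm_one_le
        have h2n : ‖Dop π K s‖ ≤ 1 := Dop_norm_le (huni s hs)
        nlinarith
  · -- ===== second conjunct =====
    by_cases hsm : α < 2/3
    · -- genuine construction
      set Φ : G → H →L[ℂ] H := fun t =>
        Pk K + Kᗮ.subtypeL.comp ((polarize (Dop π K t)).comp (Submodule.orthogonalProjectionOnto Kᗮ))
        with hΦ
      have hd1lt : ∀ s ∈ S, ‖1 - star (Dop π K s) * Dop π K s‖ < 1 := fun s hs =>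
        lt_of_le_of_lt (hdle s hs) (by nlinarith)
      have hd2lt : ∀ s ∈ S, ‖1 - Dop π K s * star (Dop π K s)‖ < 1 := fun s hs =>
        lt_of_le_of_lt (hd2le s hs) (by nlinarith)
      have hΦstar : ∀ s ∈ S, star (Φ s) = Φ s⁻¹ := by
        intro s hs
        show star (Pk K + Kᗮ.subtypeL.comp
            ((polarize (Dop π K s)).comp (Submodule.orthogonalProjectionOnto Kᗮ)))
          = Pk K + Kᗮ.subtypeL.comp
            ((polarize (Dop π K s⁻¹)).comp (Submodule.orthogonalProjectionOnto Kᗮ))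
        rw [Psi_star, ← Dop_star (hstar s hs), polarize_star (hd1lt s hs) (hd2lt s hs)]
      have hΦuni : ∀ s ∈ S, Φ s ∈ unitary (H →L[ℂ] H) := by
        intro s hs
        apply Unitary.mem_iff.mpr
        constructor
        · show star (Pk K + Kᗮ.subtypeL.comp
              ((polarize (Dop π K s)).comp (Submodule.orthogonalProjectionOnto Kᗮ)))
            * (Pk K + Kᗮ.subtypeL.comp
              ((polarize (Dop π K s)).comp (Submodule.orthogonalProjectionOnto Kᗮ))) = 1
          rw [Psi_star, Psi_mul,
            show (star (polarize (Dop π K s))).comp (polarize (Dop π K s))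
              = (1 : Kᗮ →L[ℂ] Kᗮ) from polarize_star_mul_self (hd1lt s hs), Psi_id]
        · show (Pk K + Kᗮ.subtypeL.comp
              ((polarize (Dop π K s)).comp (Submodule.orthogonalProjectionOnto Kᗮ)))
            * star (Pk K + Kᗮ.subtypeL.comp
              ((polarize (Dop π K s)).comp (Submodule.orthogonalProjectionOnto Kᗮ))) = 1
          rw [Psi_star, Psi_mul,
            show (polarize (Dop π K s)).comp (star (polarize (Dop π K s)))
              = (1 : Kᗮ →L[ℂ] Kᗮ) from polarize_mul_star_self (hd1lt s hs) (hd2lt s hs),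
            Psi_id]
      have hΦfix : ∀ s ∈ S, ∀ ξ ∈ K, Φ s ξ = ξ := by
        intro s hs ξ hξ
        show Pk K ξ + Kᗮ.subtypeL
            ((polarize (Dop π K s)) ((Submodule.orthogonalProjectionOnto Kᗮ) ξ)) = ξ
        rw [Pk_fix K hξ, Qk_of_mem_K K hξ, map_zero, map_zero, add_zero]
      have hΦpres : ∀ s ∈ S, ∀ ξ ∈ Kᗮ, Φ s ξ ∈ Kᗮ := by
        intro s hs ξ hξ
        show Pk K ξ + Kᗮ.subtypeL
            ((polarize (Dop π K s)) ((Submodule.orthogonalProjectionOnto Kᗮ) ξ)) ∈ Kᗮ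
        rw [Pk_zero K hξ, zero_add]
        exact Subtype.coe_prop _
      have hΦnorm1 : ∀ s ∈ S, ‖Φ s‖ ≤ 1 := fun s hs =>
        norm_le_one_of_star_mul_self (Unitary.mem_iff.mp (hΦuni s hs)).1
      have hΦdiff : ∀ s ∈ S, ‖Φ s - π s‖ ≤ 2 * α := by
        intro s hs
        have hs' := hsym s hs
        apply ContinuousLinearMap.opNorm_le_bound _ (by nlinarith)
        intro u
        set a : H := Pk K u with ha
        set v : Kᗮ := Submodule.orthogonalProjectionOnto Kᗮ u with hv
        have hu_split : u = a + Kᗮ.subtypeL v :=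
          (Submodule.starProjection_add_starProjection_orthogonal (K := K) u).symm
        have hΦu : Φ s u = a + Kᗮ.subtypeL (polarize (Dop π K s) v) := rfl
        have hπu : π s u = π s a + π s (Kᗮ.subtypeL v) := by
          conv_lhs => rw [hu_split]
          rw [map_add]
        have hkey : Φ s u - π s u = (a - π s a)
            + ((Kᗮ.subtypeL (polarize (Dop π K s) v) - Kᗮ.subtypeL (Dop π K s v))
              + (Kᗮ.subtypeL (Dop π K s v) - π s (Kᗮ.subtypeL v))) := by
          rw [hΦu, hπu]
          abel
        have t1 : ‖a - π s a‖ ≤ α * ‖a‖ := by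
          rw [norm_sub_rev]
          exact hinv s hs a (Pk_mem K u)
        have t2 : ‖Kᗮ.subtypeL (polarize (Dop π K s) v) - Kᗮ.subtypeL (Dop π K s v)‖
            ≤ (α * α) * ‖v‖ := by
          rw [← map_sub]
          have e : ‖Kᗮ.subtypeL (polarize (Dop π K s) v - Dop π K s v)‖
              = ‖(polarize (Dop π K s) - Dop π K s) v‖ := rfl
          rw [e]
          calc ‖(polarize (Dop π K s) - Dop π K s) v‖
              ≤ ‖polarize (Dop π K s) - Dop π K s‖ * ‖v‖ :=
                ContinuousLinearMap.le_opNorm _ _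
            _ ≤ (α * α) * ‖v‖ := by
                apply mul_le_mul_of_nonneg_right _ (norm_nonneg _)
                exact le_trans (polarize_sub_norm_le (hd1lt s hs) (hd2lt s hs)) (hdle s hs)
        have t3 : ‖Kᗮ.subtypeL (Dop π K s v) - π s (Kᗮ.subtypeL v)‖ ≤ α * ‖v‖ := by
          have e1 : Kᗮ.subtypeL (Dop π K s v) = (1 - Pk K) (π s (Kᗮ.subtypeL v)) :=
            Qk_coe K _
          have e2 : Kᗮ.subtypeL (Dop π K s v) - π s (Kᗮ.subtypeL v)
              = -(Pk K (π s (Kᗮ.subtypeL v))) := by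
            rw [e1]
            have e3 : (1 - Pk K) (π s (Kᗮ.subtypeL v))
                = π s (Kᗮ.subtypeL v) - Pk K (π s (Kᗮ.subtypeL v)) := rfl
            rw [e3]
            abel
          rw [e2, norm_neg]
          have e4 : (1 - Pk K) (Kᗮ.subtypeL v) = Kᗮ.subtypeL v :=
            one_sub_Pk_fix K (Subtype.coe_prop v)
          have e5 : Pk K (π s (Kᗮ.subtypeL v))
              = Pk K (π s ((1 - Pk K) (Kᗮ.subtypeL v))) := by rw [e4]
          rw [e5]
          calc ‖Pk K (π s ((1 - Pk K) (Kᗮ.subtypeL v)))‖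
              ≤ α * ‖(1 - Pk K) (Kᗮ.subtypeL v)‖ :=
                blockB_pt hα (hstar s hs) (hinv s⁻¹ hs') _
            _ = α * ‖v‖ := by rw [e4]; rfl
        have hpyth : ‖a‖^2 + ‖v‖^2 = ‖u‖^2 := by
          have h := Submodule.norm_sq_eq_add_norm_sq_projection u K
          have e6 : ‖a‖ = ‖Submodule.orthogonalProjectionOnto K u‖ := rfl
          rw [e6, hv]
          linarith
        have hna : 0 ≤ ‖a‖ := norm_nonneg _
        have hnv : 0 ≤ ‖v‖ := norm_nonneg _
        have hnu : 0 ≤ ‖u‖ := norm_nonneg _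
        have hz : ‖a‖ + (5/3) * ‖v‖ ≤ 2 * ‖u‖ := by
          nlinarith [sq_nonneg (9*‖a‖ - 5*‖v‖), sq_nonneg ‖v‖, sq_nonneg (‖a‖ + (5/3)*‖v‖ - 2*‖u‖),
            sq_nonneg (‖a‖ + (5/3)*‖v‖ + 2*‖u‖), mul_nonneg hna hnv, mul_nonneg hna hnu,
            mul_nonneg hnv hnu]
        have hbound : ‖Φ s u - π s u‖ ≤ α * ‖a‖ + ((α * α) * ‖v‖ + α * ‖v‖) := by
          rw [hkey]
          calc ‖(a - π s a) + ((Kᗮ.subtypeL (polarize (Dop π K s) v) - Kᗮ.subtypeL (Dop π K s v))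
              + (Kᗮ.subtypeL (Dop π K s v) - π s (Kᗮ.subtypeL v)))‖
              ≤ ‖a - π s a‖ + ‖(Kᗮ.subtypeL (polarize (Dop π K s) v) - Kᗮ.subtypeL (Dop π K s v))
                + (Kᗮ.subtypeL (Dop π K s v) - π s (Kᗮ.subtypeL v))‖ := norm_add_le _ _
            _ ≤ ‖a - π s a‖ + (‖Kᗮ.subtypeL (polarize (Dop π K s) v) - Kᗮ.subtypeL (Dop π K s v)‖
                + ‖Kᗮ.subtypeL (Dop π K s v) - π s (Kᗮ.subtypeL v)‖) := by
                have := norm_add_le (Kᗮ.subtypeL (polarize (Dop π K s) v) - Kᗮ.subtypeL (Dop π K s v))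
                  (Kᗮ.subtypeL (Dop π K s v) - π s (Kᗮ.subtypeL v))
                linarith
            _ ≤ α * ‖a‖ + ((α * α) * ‖v‖ + α * ‖v‖) := by
                have := t1; have := t2; have := t3; linarith
        calc ‖Φ s u - π s u‖ ≤ α * ‖a‖ + ((α * α) * ‖v‖ + α * ‖v‖) := hbound
          _ ≤ 2 * α * ‖u‖ := by nlinarith [mul_le_mul_of_nonneg_left hz hα, mul_nonneg hα hnv]
      -- assemble
      refine ⟨fun t => if t ∈ S then Φ t else 1, ?_, ?_, ?_, ?_, ?_, ?_, ?_⟩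
      · intro s hs
        dsimp only
        rw [if_pos hs]
        exact hΦuni s hs
      · intro s hs ξ hξ
        dsimp only
        rw [if_pos hs]
        exact hΦfix s hs ξ hξ
      · intro s hs ξ hξ
        dsimp only
        rw [if_pos hs]
        exact hΦpres s hs ξ hξ
      · intro s hs
        dsimp only
        rw [if_pos hs]
        have hcard : (1 : ℝ) ≤ (S.card : ℝ) := by
          have h := Finset.card_pos.mpr ⟨s, hs⟩
          exact_mod_cast h
        calc ‖Φ s - π s‖ ≤ 2 * α := hΦdiff s hs
          _ ≤ 3 * S.card * α := by nlinarith
      · intro s hs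
        dsimp only
        rw [if_pos hs]
        exact hΦuni s hs
      · intro s hs
        dsimp only
        rw [if_pos (hsym s hs), if_pos hs]
        exact (hΦstar s hs).symm
      · intro s₁ hs₁ s₂ hs₂ h12
        dsimp only
        rw [if_pos hs₁, if_pos hs₂, if_pos h12]
        have hcard : (1 : ℝ) ≤ (S.card : ℝ) := by
          have h := Finset.card_pos.mpr ⟨s₁, hs₁⟩
          exact_mod_cast h
        have hcomp : (Φ s₁).comp (Φ s₂) = Φ s₁ * Φ s₂ := rfl
        have hcompπ : (π s₁).comp (π s₂) = π s₁ * π s₂ := rfl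
        rw [hcomp]
        have hdecomp : Φ (s₁ * s₂) - Φ s₁ * Φ s₂
            = (Φ (s₁*s₂) - π (s₁*s₂)) + ((π (s₁*s₂) - π s₁ * π s₂)
              + ((π s₁ - Φ s₁) * π s₂ + Φ s₁ * (π s₂ - Φ s₂))) := by
          noncomm_ring
        rw [hdecomp]
        have n1 : ‖Φ (s₁*s₂) - π (s₁*s₂)‖ ≤ 2 * α := hΦdiff _ h12
        have n2 : ‖π (s₁*s₂) - π s₁ * π s₂‖ ≤ ε := by
          have := hmulπ s₁ hs₁ s₂ hs₂ h12
          rw [hcompπ] at this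
          exact this
        have n3 : ‖(π s₁ - Φ s₁) * π s₂‖ ≤ 2 * α := by
          calc ‖(π s₁ - Φ s₁) * π s₂‖ ≤ ‖π s₁ - Φ s₁‖ * ‖π s₂‖ := norm_mul_le _ _
            _ ≤ (2*α) * 1 := by
                apply mul_le_mul _ (hπnorm s₂ hs₂) (norm_nonneg _) (by nlinarith)
                rw [norm_sub_rev]
                exact hΦdiff s₁ hs₁
            _ = 2 * α := mul_one _
        have n4 : ‖Φ s₁ * (π s₂ - Φ s₂)‖ ≤ 2 * α := by
          calc ‖Φ s₁ * (π s₂ - Φ s₂)‖ ≤ ‖Φ s₁‖ * ‖π s₂ - Φ s₂‖ := norm_mul_le _ _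
            _ ≤ 1 * (2*α) := by
                apply mul_le_mul (hΦnorm1 s₁ hs₁) _ (norm_nonneg _) zero_le_one
                rw [norm_sub_rev]
                exact hΦdiff s₂ hs₂
            _ = 2 * α := one_mul _
        calc ‖(Φ (s₁*s₂) - π (s₁*s₂)) + ((π (s₁*s₂) - π s₁ * π s₂)
              + ((π s₁ - Φ s₁) * π s₂ + Φ s₁ * (π s₂ - Φ s₂)))‖
            ≤ ‖Φ (s₁*s₂) - π (s₁*s₂)‖ + (‖π (s₁*s₂) - π s₁ * π s₂‖
              + (‖(π s₁ - Φ s₁) * π s₂‖ + ‖Φ s₁ * (π s₂ - Φ s₂)‖)) := by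
              have ha1 := norm_add_le ((π s₁ - Φ s₁) * π s₂) (Φ s₁ * (π s₂ - Φ s₂))
              have ha2 := norm_add_le (π (s₁*s₂) - π s₁ * π s₂)
                ((π s₁ - Φ s₁) * π s₂ + Φ s₁ * (π s₂ - Φ s₂))
              have ha3 := norm_add_le (Φ (s₁*s₂) - π (s₁*s₂)) ((π (s₁*s₂) - π s₁ * π s₂)
                + ((π s₁ - Φ s₁) * π s₂ + Φ s₁ * (π s₂ - Φ s₂)))
              linarith
          _ ≤ ε + 6 * S.card * α := by nlinarith
    · -- trivial construction for large α
      push_neg at hsm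
      refine ⟨fun _ => 1, ?_, ?_, ?_, ?_, ?_, ?_, ?_⟩
      · intro s hs
        exact Unitary.mem_iff.mpr ⟨by simp, by simp⟩
      · intro s hs ξ hξ
        rfl
      · intro s hs ξ hξ
        exact hξ
      · intro s hs
        have hcard : (1 : ℝ) ≤ (S.card : ℝ) := by
          have h := Finset.card_pos.mpr ⟨s, hs⟩
          exact_mod_cast h
        calc ‖(1 : H →L[ℂ] H) - π s‖ ≤ ‖(1 : H →L[ℂ] H)‖ + ‖π s‖ := norm_sub_le _ _
          _ ≤ 1 + 1 := add_le_add clm_norm_one_le (hπnorm s hs)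
          _ ≤ 3 * S.card * α := by nlinarith
      · intro s hs
        exact Unitary.mem_iff.mpr ⟨by simp, by simp⟩
      · intro s hs
        simp
      · intro s₁ hs₁ s₂ hs₂ h12
        have h1 : (1 : H →L[ℂ] H).comp 1 = 1 := rfl
        rw [h1, sub_self, norm_zero]
        have hcard : (0 : ℝ) ≤ (S.card : ℝ) := Nat.cast_nonneg _
        nlinarith
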